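/- Let (X_k) be a family of Banach spaces each of which is weak*-sequentially dense in its bidual, and let 1 < p < ∞. Then the ℓ^p-direct sum ⊕_{ℓ^p} X_k is weak*-sequentially dense in its bidual ⊕_{ℓ^p} X_k**. -/

import Mathlib

open NormedSpace Filter Topology
open scoped ENNReal

noncomputable section

/-- The annihilator of a subspace `Y ⊆ X` inside the continuous dual of `X`. -/
def annih {X : Type*} [SeminormedAddCommGroup X] [NormedSpace ℝ X] (Y : Submodule ℝ X) :
    Submodule ℝ (StrongDual ℝ X) where
  carrier := {f | ∀ y ∈ Y, f y = 0}
  add_mem' := by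
    intro a b ha hb y hy
    simp [ContinuousLinearMap.add_apply, ha y hy, hb y hy]
  zero_mem' := by intro y hy; rfl
  smul_mem' := by
    intro c f hf y hy
    simp [hf y hy]

/-- A Banach space is reflexive iff the canonical embedding into its bidual is surjective. -/
def BReflexive (X : Type*) [SeminormedAddCommGroup X] [NormedSpace ℝ X] : Prop :=
  Function.Surjective (inclusionInDoubleDual ℝ X)

/-- A Banach space is coreflexive iff `X**/J_X(X)` is reflexive. -/
def Coreflexive (X : Type*) [SeminormedAddCommGroup X] [NormedSpace ℝ X] : Prop :=
  @BReflexive ((StrongDual ℝ (StrongDual ℝ X)) ⧸ LinearMap.range (inclusionInDoubleDual ℝ X).toLinearMap)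
    (Submodule.Quotient.seminormedAddCommGroup (M := StrongDual ℝ (StrongDual ℝ X)) (R := ℝ) _)
    (Submodule.Quotient.normedSpace (M := StrongDual ℝ (StrongDual ℝ X)) (R := ℝ) _ ℝ)

/-- The adjoint of a continuous linear map between normed spaces. -/
def adj {E F : Type*} [SeminormedAddCommGroup E] [NormedSpace ℝ E]
    [SeminormedAddCommGroup F] [NormedSpace ℝ F] (f : E →L[ℝ] F) :
    StrongDual ℝ F →L[ℝ] StrongDual ℝ E :=
  (ContinuousLinearMap.compL ℝ E F ℝ).flip f

/-- `X` is weak*-sequentially dense in its bidual. -/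
def WStarSeqDense (X : Type*) [SeminormedAddCommGroup X] [NormedSpace ℝ X] : Prop :=
  ∀ F : StrongDual ℝ (StrongDual ℝ X), ∃ x : ℕ → X, ∀ f : StrongDual ℝ X,
    Tendsto (fun n => inclusionInDoubleDual ℝ X (x n) f) atTop (𝓝 (F f))

/-- `x` is a point of weak-to-norm continuity of the closed unit ball of `X`. -/
def wPC (X : Type*) [SeminormedAddCommGroup X] [NormedSpace ℝ X] (x : X) : Prop :=
  ∀ l : Filter X, (∀ᶠ y in l, ‖y‖ ≤ 1) →
    (∀ f : StrongDual ℝ X, Tendsto (fun y => f y) l (𝓝 (f x))) →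
    Tendsto id l (𝓝 x)
set_option maxHeartbeats 1000000

/-- near norm attainment for real functionals -/
lemma exists_near_norm {E : Type*} [NormedAddCommGroup E] [NormedSpace ℝ E]
    (T : E →L[ℝ] ℝ) {r : ℝ} (hr : r < ‖T‖) : ∃ x : E, ‖x‖ ≤ 1 ∧ r < T x := by
  obtain ⟨x, hx1, hx2⟩ := T.exists_lt_apply_of_lt_opNorm hr
  rcases le_or_gt 0 (T x) with h | h
  · exact ⟨x, hx1.le, by rwa [Real.norm_eq_abs, abs_of_nonneg h] at hx2⟩
  · refine ⟨-x, by simpa using hx1.le, ?_⟩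
    rw [map_neg]
    rwa [Real.norm_eq_abs, abs_of_neg h] at hx2

/-- From a weak* convergent sequence one can extract convex blocks with norms
controlled by the norm of the limit functional. -/
lemma convex_blocks {E : Type*} [NormedAddCommGroup E] [NormedSpace ℝ E]
    (Φ : StrongDual ℝ (StrongDual ℝ E)) (x : ℕ → E)
    (hx : ∀ g : StrongDual ℝ E, Tendsto (fun n => g (x n)) atTop (𝓝 (Φ g)))
    {δ : ℝ} (hδ : 0 < δ) :
    ∃ y : ℕ → E, (∀ m, ‖y m‖ ≤ ‖Φ‖ + δ) ∧
      ∀ g : StrongDual ℝ E, Tendsto (fun m => g (y m)) atTop (𝓝 (Φ g)) := by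
  have step1 : ∀ m : ℕ, ∃ y ∈ convexHull ℝ (x '' Set.Ici m), ‖y‖ ≤ ‖Φ‖ + δ := by
    intro m
    by_contra hcon
    push_neg at hcon
    set r := ‖Φ‖ + δ with hrdef
    have hr : 0 < r := by positivity
    have hdisj : Disjoint (Metric.ball (0:E) r) (convexHull ℝ (x '' Set.Ici m)) := by
      rw [Set.disjoint_left]
      intro z hz1 hz2
      rw [Metric.mem_ball, dist_zero_right] at hz1
      exact absurd hz1 (not_lt.mpr (hcon z hz2).le)
    obtain ⟨g, s, hga, hgb⟩ := geometric_hahn_banach_open (convex_ball 0 r) Metric.isOpen_ball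
      (convex_convexHull ℝ _) hdisj
    have hs0 : 0 < s := by
      have := hga 0 (Metric.mem_ball_self hr)
      simpa using this
    have hΦg : s ≤ Φ g := by
      apply ge_of_tendsto (hx g)
      filter_upwards [eventually_ge_atTop m] with n hn
      exact hgb (x n) (subset_convexHull ℝ _ ⟨n, hn, rfl⟩)
    set r' := ‖Φ‖ + δ/2 with hr'def
    have hr' : 0 < r' := by positivity
    have hgnorm : ‖g‖ ≤ s / r' := by
      apply ContinuousLinearMap.opNorm_le_bound _ (by positivity)
      intro z
      rcases eq_or_ne z 0 with rfl | hz
      · simp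
      · have hzn : 0 < ‖z‖ := norm_pos_iff.mpr hz
        have hmem : (r'/‖z‖) • z ∈ Metric.ball (0:E) r := by
          rw [Metric.mem_ball, dist_zero_right, norm_smul, Real.norm_eq_abs,
            abs_of_pos (by positivity), div_mul_cancel₀ _ hzn.ne']
          rw [hrdef, hr'def]
          linarith
        have hmem' : -((r'/‖z‖) • z) ∈ Metric.ball (0:E) r := by
          rwa [Metric.mem_ball, dist_zero_right, norm_neg, ← dist_zero_right, ← Metric.mem_ball]
        have h1 := hga _ hmem
        have h2 := hga _ hmem'
        rw [map_neg] at h2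
        rw [map_smul, smul_eq_mul] at h1 h2
        have habs : |g z| * (r'/‖z‖) ≤ s := by
          have hpos' : 0 < r'/‖z‖ := by positivity
          rcases abs_cases (g z) with ⟨h, _⟩ | ⟨h, _⟩
          · rw [h]; nlinarith
          · rw [h]; nlinarith
        rw [Real.norm_eq_abs, div_mul_eq_mul_div, le_div_iff₀ hr']
        calc |g z| * r' = (|g z| * (r'/‖z‖)) * ‖z‖ := by field_simp
          _ ≤ s * ‖z‖ := mul_le_mul_of_nonneg_right habs hzn.le
    have hchain : s ≤ ‖Φ‖ * (s / r') :=
      le_trans hΦg (le_trans (le_abs_self _) (le_trans (Φ.le_opNorm g)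
        (mul_le_mul_of_nonneg_left hgnorm (norm_nonneg Φ))))
    have hlt : ‖Φ‖ * (s/r') < s := by
      rw [mul_div_assoc', div_lt_iff₀ hr']
      have hΦr' : ‖Φ‖ < r' := by rw [hr'def]; linarith
      nlinarith
    linarith
  choose y hy1 hy2 using step1
  refine ⟨y, hy2, ?_⟩
  intro g
  rw [Metric.tendsto_atTop]
  intro ε hε
  obtain ⟨m0, hm0⟩ := Metric.tendsto_atTop.mp (hx g) (ε/2) (by linarith)
  refine ⟨m0, fun m hm => ?_⟩
  have hA : convexHull ℝ (x '' Set.Ici m) ⊆ {z : E | dist (g z) (Φ g) ≤ ε/2} := by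
    apply convexHull_min
    · rintro z ⟨n, hn, rfl⟩
      exact (hm0 n (le_trans hm hn)).le
    · have hset : {z : E | dist (g z) (Φ g) ≤ ε/2} =
          (g : E →ₗ[ℝ] ℝ) ⁻¹' Metric.closedBall (Φ g) (ε/2) := by
        ext z
        simp [Metric.mem_closedBall]
      rw [hset]
      exact (convex_closedBall _ _).linear_preimage _
  have := hA (hy1 m)
  calc dist (g (y m)) (Φ g) ≤ ε/2 := this
    _ < ε := by linarith

namespace Stmt8Aux

variable {X : ℕ → Type*} [∀ k, NormedAddCommGroup (X k)] [∀ k, NormedSpace ℝ (X k)]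
  (p : ℝ≥0∞) [Fact (1 ≤ p)]

lemma p_ne_zero : p ≠ 0 := (zero_lt_one.trans_le (Fact.out : 1 ≤ p)).ne'

protected lemma single_add (k : ℕ) (a b : X k) :
    lp.single p k (a + b) = lp.single p k a + lp.single p k b := by
  apply lp.ext
  funext j
  by_cases h : j = k
  · subst h; simp [lp.single_apply_self]
  · simp [lp.single_apply_ne p k _ h]

/-- `lp.single` as a continuous linear map. -/
def sgl (hpr : 0 < p.toReal) (k : ℕ) : X k →L[ℝ] lp X p :=
  LinearMap.mkContinuous
    { toFun := fun a => lp.single p k a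
      map_add' := fun a b => Stmt8Aux.single_add p k a b
      map_smul' := fun c a => lp.single_smul p k c a }
    1 (fun a => by
      have : ‖lp.single p k a‖ = ‖a‖ := by
        have := lp.norm_single (ENNReal.toReal_pos_iff.mp hpr).1 k a
        exact this
      calc ‖lp.single p k a‖ = ‖a‖ := this
        _ ≤ 1 * ‖a‖ := by rw [one_mul])

@[simp] lemma sgl_apply (hpr : 0 < p.toReal) (k : ℕ) (a : X k) :
    sgl p hpr k a = lp.single p k a := rfl

/-- coordinate projection as a continuous linear map. -/
def prj (k : ℕ) : lp X p →L[ℝ] X k :=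
  LinearMap.mkContinuous
    { toFun := fun x => x k
      map_add' := fun a b => rfl
      map_smul' := fun c a => rfl }
    1 (fun x => by rw [one_mul]; exact lp.norm_apply_le_norm (p_ne_zero p) x k)

@[simp] lemma prj_apply (k : ℕ) (x : lp X p) : prj p k x = x k := rfl

/-- truncation to the first `N` coordinates. -/
def PN (hpr : 0 < p.toReal) (N : ℕ) : lp X p →L[ℝ] lp X p :=
  ∑ k ∈ Finset.range N, (sgl p hpr k).comp (prj p k)

lemma PN_eq_sum (hpr : 0 < p.toReal) (N : ℕ) (x : lp X p) :
    PN p hpr N x = ∑ k ∈ Finset.range N, lp.single p k (x k) := by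
  simp [PN, ContinuousLinearMap.sum_apply]

lemma PN_coe (hpr : 0 < p.toReal) (N : ℕ) (x : lp X p) (j : ℕ) :
    (PN p hpr N x : ∀ i, X i) j = if j < N then x j else 0 := by
  rw [PN_eq_sum]
  simp only [lp.coeFn_sum, Finset.sum_apply, lp.single_apply, Finset.sum_pi_single, Finset.sum_dite_eq,
    Finset.mem_range]

lemma PN_eq_zero (hpr : 0 < p.toReal) (N : ℕ) (x : lp X p) (h : ∀ j, j < N → x j = 0) :
    PN p hpr N x = 0 := by
  apply lp.ext
  funext j
  rw [PN_coe]
  split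
  · rw [h j ‹_›]; rfl
  · rfl

lemma norm_sub_PN_le (hpr : 0 < p.toReal) (N : ℕ) (x : lp X p) :
    ‖x - PN p hpr N x‖ ≤ ‖x‖ := by
  rw [← Real.rpow_le_rpow_iff (norm_nonneg _) (norm_nonneg _) hpr]
  rw [PN_eq_sum, lp.norm_compl_sum_single hpr]
  have : (0:ℝ) ≤ ∑ k ∈ Finset.range N, ‖x k‖ ^ p.toReal :=
    Finset.sum_nonneg fun k _ => Real.rpow_nonneg (norm_nonneg _) _
  linarith


lemma norm_trunc_antitone (hpr : 0 < p.toReal) (f : (lp X p) →L[ℝ] ℝ) {N M : ℕ} (h : N ≤ M) :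
    ‖f - f.comp (PN p hpr M)‖ ≤ ‖f - f.comp (PN p hpr N)‖ := by
  apply ContinuousLinearMap.opNorm_le_bound _ (norm_nonneg _)
  intro x
  have key : (f - f.comp (PN p hpr M)) x = (f - f.comp (PN p hpr N)) (x - PN p hpr M x) := by
    have hz : PN p hpr N (x - PN p hpr M x) = 0 := by
      apply PN_eq_zero
      intro j hj
      rw [lp.coeFn_sub, Pi.sub_apply, PN_coe, if_pos (lt_of_lt_of_le hj h), sub_self]
    have h2 : PN p hpr N (PN p hpr M x) = PN p hpr N x := by
      rw [map_sub, sub_eq_zero] at hz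
      exact hz.symm
    simp only [ContinuousLinearMap.sub_apply, ContinuousLinearMap.coe_comp', Function.comp_apply,
      map_sub, h2]
    ring
  rw [key]
  calc ‖(f - f.comp (PN p hpr N)) (x - PN p hpr M x)‖
      ≤ ‖f - f.comp (PN p hpr N)‖ * ‖x - PN p hpr M x‖ := ContinuousLinearMap.le_opNorm _ _
    _ ≤ ‖f - f.comp (PN p hpr N)‖ * ‖x‖ := by
        exact mul_le_mul_of_nonneg_left (norm_sub_PN_le p hpr M x) (norm_nonneg _)


lemma eq_sum_single (x : lp X p) (K : ℕ) (h : ∀ j, K ≤ j → x j = 0) :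
    x = ∑ k ∈ Finset.range K, lp.single p k (x k) := by
  apply lp.ext
  funext j
  simp only [lp.coeFn_sum, Finset.sum_apply, lp.single_apply, Finset.sum_pi_single, Finset.sum_dite_eq,
    Finset.mem_range]
  split
  · rfl
  · exact h j (not_lt.mp ‹_›)

lemma sum_single_coe (s : Finset ℕ) (w : ∀ i, X i) (j : ℕ) :
    ((∑ i ∈ s, lp.single p i (w i) : lp X p) : ∀ i, X i) j = if j ∈ s then w j else 0 := by
  simp only [lp.coeFn_sum, Finset.sum_apply, lp.single_apply, Finset.sum_pi_single, Finset.sum_dite_eq]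

lemma trunc_tendsto (hpr1 : 1 < p.toReal) (f : (lp X p) →L[ℝ] ℝ) :
    Tendsto (fun N => ‖f - f.comp (PN p (zero_lt_one.trans hpr1) N)‖) atTop (𝓝 0) := by
  have hpr : 0 < p.toReal := zero_lt_one.trans hpr1
  have hptop : p ≠ ⊤ := by
    intro h
    rw [h] at hpr1
    simp at hpr1
    linarith
  set a : ℕ → ℝ := fun N => ‖f - f.comp (PN p hpr N)‖ with ha
  have hanti : Antitone a := fun N M h => norm_trunc_antitone p hpr f h
  have hbdd : BddBelow (Set.range a) := ⟨0, by rintro y ⟨N, rfl⟩; exact norm_nonneg _⟩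
  have htend : Tendsto a atTop (𝓝 (⨅ N, a N)) := tendsto_atTop_ciInf hanti hbdd
  set c := ⨅ N, a N with hcdef
  have hc0 : 0 ≤ c := le_ciInf fun N => norm_nonneg _
  rcases eq_or_lt_of_le hc0 with h | hc
  · rw [← h] at htend; exact htend
  exfalso
  -- the blocks claim
  have claim : ∀ N : ℕ, ∃ q : ℕ × lp X p, N < q.1 ∧ ‖q.2‖ ≤ 1 ∧
      (∀ j, j < N → q.2 j = 0) ∧ (∀ j, q.1 ≤ j → q.2 j = 0) ∧ c/2 < f q.2 := by
    intro N
    have hN : c/2 < ‖f - f.comp (PN p hpr N)‖ :=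
      lt_of_lt_of_le (half_lt_self hc) (ciInf_le hbdd N)
    obtain ⟨x, hx1, hx2⟩ := exists_near_norm _ hN
    set w : lp X p := x - PN p hpr N x with hw
    have hw1 : ‖w‖ ≤ 1 := le_trans (norm_sub_PN_le p hpr N x) hx1
    have hwz : ∀ j, j < N → w j = 0 := by
      intro j hj
      rw [hw, lp.coeFn_sub, Pi.sub_apply, PN_coe, if_pos hj, sub_self]
    have hfw : c/2 < f w := by
      rw [hw, map_sub]
      exact hx2
    have hsum : HasSum (fun i => f (lp.single p i (w i))) (f w) :=
      (lp.hasSum_single hptop w).mapL f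
    have hev : ∀ᶠ s : Finset ℕ in atTop, c/2 < ∑ i ∈ s, f (lp.single p i (w i)) :=
      hsum.eventually (lt_mem_nhds hfw)
    obtain ⟨s, hs⟩ := hev.exists
    set M := max (N+1) (s.sup id + 1) with hM
    set u : lp X p := ∑ i ∈ s, lp.single p i (w i) with hu
    refine ⟨(M, u), lt_of_lt_of_le (Nat.lt_succ_self N) (le_max_left _ _), ?_, ?_, ?_, ?_⟩
    · -- ‖u‖ ≤ 1
      have h1 : ‖u‖ ^ p.toReal = ∑ i ∈ s, ‖w i‖ ^ p.toReal := lp.norm_sum_single hpr (⇑w) s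
      have h2 : ∑ i ∈ s, ‖w i‖ ^ p.toReal ≤ ‖w‖ ^ p.toReal :=
        sum_le_hasSum s (fun i _ => Real.rpow_nonneg (norm_nonneg _) _) (lp.hasSum_norm hpr w)
      have h3 : ‖w‖ ^ p.toReal ≤ 1 := Real.rpow_le_one (norm_nonneg _) hw1 hpr.le
      have h4 : ‖u‖ ^ p.toReal ≤ 1 ^ p.toReal := by
        rw [Real.one_rpow]; linarith
      exact (Real.rpow_le_rpow_iff (norm_nonneg _) zero_le_one hpr).mp h4
    · intro j hj
      rw [hu, sum_single_coe]
      split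
      · exact hwz j hj
      · rfl
    · intro j hj
      rw [hu, sum_single_coe]
      have : j ∉ s := by
        intro hjs
        have h5 : j ≤ s.sup id := Finset.le_sup (f := id) hjs
        have h6 : s.sup id + 1 ≤ j := le_trans (le_max_right _ _) hj
        omega
      rw [if_neg this]
    · rw [hu, map_sum]
      exact hs
  choose pick h1 h2 h3 h4 h5 using claim
  set Nseq : ℕ → ℕ := fun i => Nat.rec 0 (fun _ prev => (pick prev).1) i with hNseq
  have Nsucc : ∀ i, Nseq (i+1) = (pick (Nseq i)).1 := fun i => rfl
  set u : ℕ → lp X p := fun i => (pick (Nseq i)).2 with hudef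
  have hNlt : ∀ i, Nseq i < Nseq (i+1) := fun i => h1 (Nseq i)
  have mono : StrictMono Nseq := strictMono_nat_of_lt_succ hNlt
  have hu1 : ∀ i, ‖u i‖ ≤ 1 := fun i => h2 (Nseq i)
  have hu2 : ∀ i j, j < Nseq i → u i j = 0 := fun i => h3 (Nseq i)
  have hu3 : ∀ i j, Nseq (i+1) ≤ j → u i j = 0 := fun i j hj => h4 (Nseq i) j (by rwa [← Nsucc i])
  have hu4 : ∀ i, c/2 < f (u i) := fun i => h5 (Nseq i)
  set v : ℕ → lp X p := fun M => ∑ i ∈ Finset.range M, u i with hv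
  -- coordinates of v
  have hvcoe : ∀ M j, (v M : ∀ i, X i) j = ∑ i ∈ Finset.range M, u i j := by
    intro M j
    simp only [hv, lp.coeFn_sum, Finset.sum_apply]
  have hblock : ∀ M i j, i < M → Nseq i ≤ j → j < Nseq (i+1) → (v M : ∀ i, X i) j = u i j := by
    intro M i j hiM hij hji
    rw [hvcoe]
    apply Finset.sum_eq_single_of_mem i (Finset.mem_range.mpr hiM)
    intro i' _ hne
    rcases lt_or_gt_of_ne hne with h | h
    · exact hu3 i' j (le_trans (mono.monotone (Nat.succ_le_of_lt h)) hij)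
    · exact hu2 i' j (lt_of_lt_of_le hji (mono.monotone (Nat.succ_le_of_lt h)))
  have hvout : ∀ M j, Nseq M ≤ j → (v M : ∀ i, X i) j = 0 := by
    intro M j hj
    rw [hvcoe]
    apply Finset.sum_eq_zero
    intro i hi
    exact hu3 i j (le_trans (mono.monotone (Finset.mem_range.mp hi)) hj)
  -- norm bound
  have hnorm : ∀ M : ℕ, ‖v M‖ ^ p.toReal ≤ M := by
    intro M
    have hrepr : v M = ∑ k ∈ Finset.range (Nseq M), lp.single p k ((v M) k) :=
      eq_sum_single p (v M) (Nseq M) (hvout M)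
    have e1 : ‖v M‖ ^ p.toReal = ∑ k ∈ Finset.range (Nseq M), ‖(v M) k‖ ^ p.toReal := by
      conv_lhs => rw [hrepr]
      exact lp.norm_sum_single hpr (⇑(v M)) (Finset.range (Nseq M))
    rw [e1]
    -- partition estimate by induction on m ≤ M
    have key : ∀ m, m ≤ M → ∑ k ∈ Finset.range (Nseq m), ‖(v M) k‖ ^ p.toReal ≤ m := by
      intro m
      induction m with
      | zero => intro _; simp [show Nseq 0 = 0 from rfl]
      | succ m ih =>
        intro hm
        have hmM : m ≤ M := le_trans (Nat.le_succ m) hm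
        have hsplit : (∑ k ∈ Finset.Ico 0 (Nseq m), ‖(v M) k‖ ^ p.toReal) +
            (∑ k ∈ Finset.Ico (Nseq m) (Nseq (m+1)), ‖(v M) k‖ ^ p.toReal) =
            ∑ k ∈ Finset.Ico 0 (Nseq (m+1)), ‖(v M) k‖ ^ p.toReal :=
          Finset.sum_Ico_consecutive _ (Nat.zero_le _) (hNlt m).le
        have hico : ∑ k ∈ Finset.Ico (Nseq m) (Nseq (m+1)), ‖(v M) k‖ ^ p.toReal ≤ 1 := by
          have heq : ∀ k ∈ Finset.Ico (Nseq m) (Nseq (m+1)),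
              ‖(v M) k‖ ^ p.toReal = ‖(u m) k‖ ^ p.toReal := by
            intro k hk
            rw [Finset.mem_Ico] at hk
            rw [hblock M m k (Nat.lt_of_succ_le hm) hk.1 hk.2]
          rw [Finset.sum_congr rfl heq]
          calc ∑ k ∈ Finset.Ico (Nseq m) (Nseq (m+1)), ‖(u m) k‖ ^ p.toReal
              ≤ ‖u m‖ ^ p.toReal := sum_le_hasSum _
                (fun i _ => Real.rpow_nonneg (norm_nonneg _) _) (lp.hasSum_norm hpr (u m))
            _ ≤ 1 := Real.rpow_le_one (norm_nonneg _) (hu1 m) hpr.le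
        have := ih hmM
        simp only [← Finset.range_eq_Ico] at hsplit
        rw [← hsplit]
        push_cast
        linarith
    exact key M le_rfl
  -- lower bound on f (v M)
  have hlow : ∀ M : ℕ, (c/2) * M ≤ f (v M) := by
    intro M
    have : f (v M) = ∑ i ∈ Finset.range M, f (u i) := by rw [hv]; exact map_sum f _ _
    rw [this]
    have := Finset.card_nsmul_le_sum (Finset.range M) (fun i => f (u i)) (c/2)
      (fun i _ => (hu4 i).le)
    rw [Finset.card_range, nsmul_eq_mul] at this
    linarith [this]
  -- upper bound
  have hup : ∀ M : ℕ, f (v M) ≤ ‖f‖ * (M:ℝ) ^ (1/p.toReal) := by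
    intro M
    have hnv : ‖v M‖ ≤ (M:ℝ) ^ (1/p.toReal) := by
      have h4 : ‖v M‖ ^ p.toReal ≤ ((M:ℝ) ^ (1/p.toReal)) ^ p.toReal := by
        rw [← Real.rpow_mul (Nat.cast_nonneg M), one_div, inv_mul_cancel₀ hpr.ne',
          Real.rpow_one]
        exact hnorm M
      exact (Real.rpow_le_rpow_iff (norm_nonneg _)
        (Real.rpow_nonneg (Nat.cast_nonneg M) _) hpr).mp h4
    calc f (v M) ≤ ‖f (v M)‖ := le_abs_self _
      _ ≤ ‖f‖ * ‖v M‖ := ContinuousLinearMap.le_opNorm f _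
      _ ≤ ‖f‖ * (M:ℝ) ^ (1/p.toReal) := by
          exact mul_le_mul_of_nonneg_left hnv (norm_nonneg f)
  -- contradiction
  have hexp : 0 < 1 - 1/p.toReal := by
    have : 1/p.toReal < 1 := by
      rw [div_lt_one hpr]; exact hpr1
    linarith
  have htop : Tendsto (fun M:ℕ => (M:ℝ) ^ (1 - 1/p.toReal)) atTop atTop :=
    (tendsto_rpow_atTop hexp).comp tendsto_natCast_atTop_atTop
  obtain ⟨M, hM1, hM2⟩ := ((htop.eventually_gt_atTop (2*‖f‖/c)).and (eventually_ge_atTop 1)).exists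
  have hM0 : (0:ℝ) < M := by exact_mod_cast Nat.lt_of_lt_of_le Nat.zero_lt_one hM2
  have hsplit : (M:ℝ) = (M:ℝ) ^ (1/p.toReal) * (M:ℝ) ^ (1 - 1/p.toReal) := by
    rw [← Real.rpow_add hM0]
    norm_num
  have hineq : (c/2) * ((M:ℝ) ^ (1/p.toReal) * (M:ℝ) ^ (1 - 1/p.toReal)) ≤
      ‖f‖ * (M:ℝ) ^ (1/p.toReal) := by
    rw [← hsplit]
    exact le_trans (hlow M) (hup M)
  have hpos : 0 < (M:ℝ) ^ (1/p.toReal) := Real.rpow_pos_of_pos hM0 _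
  have h7 : (c/2) * (M:ℝ) ^ (1 - 1/p.toReal) ≤ ‖f‖ := by
    have h := hineq
    rw [show (c/2) * ((M:ℝ) ^ (1/p.toReal) * (M:ℝ) ^ (1 - 1/p.toReal)) =
      ((c/2) * (M:ℝ) ^ (1 - 1/p.toReal)) * (M:ℝ) ^ (1/p.toReal) from by ring] at h
    rw [show ‖f‖ * (M:ℝ) ^ (1/p.toReal) = ‖f‖ * (M:ℝ) ^ (1/p.toReal) from rfl] at h
    exact le_of_mul_le_mul_right h hpos
  have h8 : 2*‖f‖ < (M:ℝ) ^ (1 - 1/p.toReal) * c := (div_lt_iff₀ hc).mp hM1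
  nlinarith


/-- The adjoint of coordinate projection, embedding `Dual (X k)` into `Dual (lp X p)`. -/
def adjPrj (k : ℕ) : StrongDual ℝ (X k) →L[ℝ] StrongDual ℝ (lp X p) :=
  (ContinuousLinearMap.compL ℝ (lp X p) (X k) ℝ).flip (prj p k)

lemma adjPrj_apply (k : ℕ) (g : StrongDual ℝ (X k)) : adjPrj p k g = g.comp (prj p k) := rfl

lemma sum_rpow_norm_bidual_le (hpr1 : 1 < p.toReal) (F : StrongDual ℝ (StrongDual ℝ (lp X p)))
    (s : Finset ℕ) :
    ∑ k ∈ s, ‖F.comp (adjPrj p k)‖ ^ p.toReal ≤ ‖F‖ ^ p.toReal := by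
  have hpr : 0 < p.toReal := zero_lt_one.trans hpr1
  set pr := p.toReal with hprdef
  set qr := Real.conjExponent pr with hqrdef
  have hconj : pr.HolderConjugate qr := Real.HolderConjugate.conjExponent hpr1
  set t : ℕ → ℝ := fun k => ‖F.comp (adjPrj p k)‖ with htdef
  have ht0 : ∀ k, 0 ≤ t k := fun k => norm_nonneg (F.comp (adjPrj p k))
  set S := ∑ k ∈ s, t k ^ pr with hSdef
  have hS0 : 0 ≤ S := Finset.sum_nonneg fun k _ => Real.rpow_nonneg (ht0 k) _
  set a : ℕ → ℝ := fun k => t k ^ (pr - 1) with hadef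
  have ha0 : ∀ k, 0 ≤ a k := fun k => Real.rpow_nonneg (ht0 k) _
  have hat : ∀ k, a k * t k = t k ^ pr := by
    intro k
    rcases eq_or_lt_of_le (ht0 k) with h | h
    · rw [← h, mul_zero, Real.zero_rpow (ne_of_gt hpr)]
    · conv_lhs => rw [show t k = t k ^ (1:ℝ) from (Real.rpow_one _).symm]
      rw [hadef]
      rw [← Real.rpow_add h]
      norm_num
  have haq : ∀ k, a k ^ qr = t k ^ pr := by
    intro k
    show (t k ^ (pr - 1)) ^ qr = t k ^ pr
    rw [← Real.rpow_mul (ht0 k), hconj.sub_one_mul_conj]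
  have key : S ≤ ‖F‖ * S ^ (1/qr) := by
    apply le_of_forall_pos_le_add
    intro ε hε
    set ε' := ε / (∑ k ∈ s, a k + 1) with hε'def
    have hden : 0 < ∑ k ∈ s, a k + 1 := by
      have : 0 ≤ ∑ k ∈ s, a k := Finset.sum_nonneg fun k _ => ha0 k
      linarith
    have hε' : 0 < ε' := div_pos hε hden
    have hg : ∀ k, ∃ g : StrongDual ℝ (X k), ‖g‖ ≤ 1 ∧ t k - ε' < (F.comp (adjPrj p k)) g :=
      fun k => exists_near_norm _ (by linarith : t k - ε' < t k)
    choose g hg1 hg2 using hg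
    set φ : StrongDual ℝ (lp X p) := ∑ k ∈ s, a k • ((g k).comp (prj p k)) with hφdef
    have hφnorm : ‖φ‖ ≤ S ^ (1/qr) := by
      apply ContinuousLinearMap.opNorm_le_bound _ (Real.rpow_nonneg hS0 _)
      intro x
      have e1 : φ x = ∑ k ∈ s, a k * (g k) (x k) := by
        rw [hφdef]
        simp [ContinuousLinearMap.sum_apply]
      rw [e1, Real.norm_eq_abs]
      calc |∑ k ∈ s, a k * (g k) (x k)| ≤ ∑ k ∈ s, |a k * (g k) (x k)| :=
            Finset.abs_sum_le_sum_abs _ _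
        _ ≤ ∑ k ∈ s, a k * ‖x k‖ := by
            apply Finset.sum_le_sum
            intro k _
            rw [abs_mul, abs_of_nonneg (ha0 k)]
            apply mul_le_mul_of_nonneg_left _ (ha0 k)
            calc |(g k) (x k)| ≤ ‖g k‖ * ‖x k‖ := (g k).le_opNorm _
              _ ≤ 1 * ‖x k‖ := mul_le_mul_of_nonneg_right (hg1 k) (norm_nonneg _)
              _ = ‖x k‖ := one_mul _
        _ ≤ (∑ k ∈ s, a k ^ qr) ^ (1/qr) * (∑ k ∈ s, ‖x k‖ ^ pr) ^ (1/pr) :=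
            Real.inner_le_Lp_mul_Lq_of_nonneg s hconj.symm (fun k _ => ha0 k)
              (fun k _ => norm_nonneg _)
        _ ≤ S ^ (1/qr) * ‖x‖ := by
            apply mul_le_mul
            · rw [show ∑ k ∈ s, a k ^ qr = S from Finset.sum_congr rfl (fun k _ => haq k)]
            · have h2 : ∑ k ∈ s, ‖x k‖ ^ pr ≤ ‖x‖ ^ pr :=
                sum_le_hasSum s (fun k _ => Real.rpow_nonneg (norm_nonneg _) _)
                  (lp.hasSum_norm hpr x)
              calc (∑ k ∈ s, ‖x k‖ ^ pr) ^ (1/pr) ≤ (‖x‖ ^ pr) ^ (1/pr) :=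
                    Real.rpow_le_rpow (Finset.sum_nonneg fun k _ =>
                      Real.rpow_nonneg (norm_nonneg _) _) h2 (by positivity)
                _ = ‖x‖ := by
                    rw [← Real.rpow_mul (norm_nonneg _), mul_one_div, div_self hpr.ne',
                      Real.rpow_one]
            · positivity
            · exact Real.rpow_nonneg hS0 _
    have hFφ : ∑ k ∈ s, a k * (t k - ε') ≤ F φ := by
      have e2 : F φ = ∑ k ∈ s, a k * (F.comp (adjPrj p k)) (g k) := by
        rw [hφdef, map_sum]
        apply Finset.sum_congr rfl
        intro k _
        rw [map_smul]
        rfl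
      rw [e2]
      apply Finset.sum_le_sum
      intro k _
      exact mul_le_mul_of_nonneg_left (hg2 k).le (ha0 k)
    have hchain : S - ε' * (∑ k ∈ s, a k) ≤ ‖F‖ * S ^ (1/qr) := by
      have h3 : F φ ≤ ‖F‖ * ‖φ‖ := le_trans (le_abs_self _) (F.le_opNorm φ)
      have h4 : ∑ k ∈ s, a k * (t k - ε') = S - ε' * (∑ k ∈ s, a k) := by
        rw [hSdef, Finset.mul_sum, ← Finset.sum_sub_distrib]
        apply Finset.sum_congr rfl
        intro k _
        rw [← hat k]
        ring
      have h5 : ‖F‖ * ‖φ‖ ≤ ‖F‖ * S ^ (1/qr) :=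
        mul_le_mul_of_nonneg_left hφnorm (norm_nonneg F)
      linarith [hFφ, h3, h5, h4]
    have h6 : ε' * (∑ k ∈ s, a k) ≤ ε := by
      have : ε' * (∑ k ∈ s, a k) ≤ ε' * (∑ k ∈ s, a k + 1) := by nlinarith
      rw [hε'def, div_mul_cancel₀ _ hden.ne'] at this
      exact this
    linarith
  rcases eq_or_lt_of_le hS0 with h | hSpos
  · rw [← h]
    exact Real.rpow_nonneg (norm_nonneg F) _
  have hsplit : S = S ^ (1/qr) * S ^ (1/pr) := by
    rw [← Real.rpow_add hSpos]
    rw [show 1/qr + 1/pr = 1 by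
      rw [one_div, one_div, add_comm]
      exact hconj.inv_add_inv_eq_one]
    exact (Real.rpow_one S).symm
  have hq0 : 0 < S ^ (1/qr) := Real.rpow_pos_of_pos hSpos _
  have h7 : S ^ (1/pr) ≤ ‖F‖ := by
    have h : S ^ (1/pr) * S ^ (1/qr) ≤ ‖F‖ * S ^ (1/qr) := by
      rw [mul_comm (S ^ (1/pr)) (S ^ (1/qr)), ← hsplit]
      exact key
    exact le_of_mul_le_mul_right h hq0
  calc S = (S ^ (1/pr)) ^ pr := by
        rw [← Real.rpow_mul hS0, one_div, inv_mul_cancel₀ hpr.ne', Real.rpow_one]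
    _ ≤ ‖F‖ ^ pr := Real.rpow_le_rpow (Real.rpow_nonneg hS0 _) h7 hpr.le


lemma add_rpow_le_two_rpow {a b pr : ℝ} (ha : 0 ≤ a) (hb : 0 ≤ b) (hpr : 0 < pr) :
    (a + b) ^ pr ≤ 2 ^ pr * (a ^ pr + b ^ pr) := by
  have h1 : a + b ≤ 2 * max a b := by
    rcases max_cases a b with ⟨h, h'⟩ | ⟨h, h'⟩ <;> rw [h] <;> linarith
  have hm : 0 ≤ max a b := le_max_of_le_left ha
  calc (a + b) ^ pr ≤ (2 * max a b) ^ pr :=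
        Real.rpow_le_rpow (by linarith) h1 hpr.le
    _ = 2 ^ pr * (max a b) ^ pr := Real.mul_rpow (by norm_num) hm
    _ ≤ 2 ^ pr * (a ^ pr + b ^ pr) := by
        apply mul_le_mul_of_nonneg_left _ (by positivity)
        rcases max_cases a b with ⟨h, _⟩ | ⟨h, _⟩ <;> rw [h]
        · nlinarith [Real.rpow_nonneg hb pr]
        · nlinarith [Real.rpow_nonneg ha pr]

end Stmt8Aux

theorem stmt8' (X : ℕ → Type*) [∀ k, NormedAddCommGroup (X k)] [∀ k, NormedSpace ℝ (X k)]
    [∀ k, CompleteSpace (X k)] (p : ℝ≥0∞) [Fact (1 ≤ p)] (hp1 : 1 < p) (hp2 : p ≠ ⊤)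
    (hX : ∀ k, ∀ F : StrongDual ℝ (StrongDual ℝ (X k)), ∃ x : ℕ → X k, ∀ f : StrongDual ℝ (X k),
      Tendsto (fun n => inclusionInDoubleDual ℝ (X k) (x n) f) atTop (𝓝 (F f))) :
    ∀ F : StrongDual ℝ (StrongDual ℝ (lp X p)), ∃ x : ℕ → lp X p, ∀ f : StrongDual ℝ (lp X p),
      Tendsto (fun n => inclusionInDoubleDual ℝ (lp X p) (x n) f) atTop (𝓝 (F f)) := by
  have hpr1 : 1 < p.toReal := by
    rw [show (1:ℝ) = (1:ℝ≥0∞).toReal by simp]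
    exact (ENNReal.toReal_lt_toReal (by simp) hp2).mpr hp1
  have hpr : 0 < p.toReal := zero_lt_one.trans hpr1
  intro F
  set Fk : ∀ k, StrongDual ℝ (StrongDual ℝ (X k)) := fun k => F.comp (Stmt8Aux.adjPrj p k) with hFkdef
  set t : ℕ → ℝ := fun k => ‖Fk k‖ with htdef
  have hxk : ∀ k, ∃ x : ℕ → X k, ∀ g : StrongDual ℝ (X k),
      Tendsto (fun n => g (x n)) atTop (𝓝 (Fk k g)) := by
    intro k
    obtain ⟨x, hx⟩ := hX k (Fk k)
    refine ⟨x, fun g => ?_⟩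
    have := hx g
    simpa [NormedSpace.dual_def] using this
  choose x0 hx0 using hxk
  have hblocks : ∀ k, ∃ y : ℕ → X k, (∀ m, ‖y m‖ ≤ t k + (1/2:ℝ)^k) ∧
      ∀ g : StrongDual ℝ (X k), Tendsto (fun m => g (y m)) atTop (𝓝 (Fk k g)) :=
    fun k => convex_blocks (Fk k) (x0 k) (hx0 k) (by positivity)
  choose y hy1 hy2 using hblocks
  set z : ℕ → lp X p := fun m => ∑ k ∈ Finset.range m, lp.single p k (y k m) with hzdef
  refine ⟨z, ?_⟩
  intro f
  have hJ : ∀ n, inclusionInDoubleDual ℝ (lp X p) (z n) f = f (z n) :=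
    fun n => NormedSpace.dual_def ℝ _ (z n) f
  simp only [hJ]
  -- uniform bound on ‖z m‖
  set B : ℝ := ((2:ℝ) ^ p.toReal * (‖F‖ ^ p.toReal + 2)) ^ (1/p.toReal) with hBdef
  have hB0 : 0 ≤ B := Real.rpow_nonneg (by positivity) _
  have hzB : ∀ m, ‖z m‖ ≤ B := by
    intro m
    have e1 : ‖z m‖ ^ p.toReal = ∑ k ∈ Finset.range m, ‖y k m‖ ^ p.toReal :=
      lp.norm_sum_single hpr (fun k => y k m) (Finset.range m)
    have e2 : ∑ k ∈ Finset.range m, ‖y k m‖ ^ p.toReal ≤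
        (2:ℝ) ^ p.toReal * (‖F‖ ^ p.toReal + 2) := by
      have step : ∀ k ∈ Finset.range m, ‖y k m‖ ^ p.toReal ≤
          (2:ℝ) ^ p.toReal * (t k ^ p.toReal + (1/2:ℝ)^k) := by
        intro k _
        calc ‖y k m‖ ^ p.toReal ≤ (t k + (1/2:ℝ)^k) ^ p.toReal :=
              Real.rpow_le_rpow (norm_nonneg _) (hy1 k m) hpr.le
          _ ≤ (2:ℝ) ^ p.toReal * (t k ^ p.toReal + ((1/2:ℝ)^k) ^ p.toReal) :=
              Stmt8Aux.add_rpow_le_two_rpow (norm_nonneg (Fk k)) (by positivity) hpr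
          _ ≤ (2:ℝ) ^ p.toReal * (t k ^ p.toReal + (1/2:ℝ)^k) := by
              apply mul_le_mul_of_nonneg_left _ (by positivity)
              have : ((1/2:ℝ)^k) ^ p.toReal ≤ ((1/2:ℝ)^k) ^ (1:ℝ) :=
                Real.rpow_le_rpow_of_exponent_ge (by positivity)
                  (by
                    apply pow_le_one₀ (by norm_num)
                    norm_num) hpr1.le
              rw [Real.rpow_one] at this
              linarith
      calc ∑ k ∈ Finset.range m, ‖y k m‖ ^ p.toReal
          ≤ ∑ k ∈ Finset.range m, (2:ℝ) ^ p.toReal * (t k ^ p.toReal + (1/2:ℝ)^k) :=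
            Finset.sum_le_sum step
        _ = (2:ℝ) ^ p.toReal * ((∑ k ∈ Finset.range m, t k ^ p.toReal) +
            ∑ k ∈ Finset.range m, (1/2:ℝ)^k) := by
            rw [← Finset.mul_sum, Finset.sum_add_distrib]
        _ ≤ (2:ℝ) ^ p.toReal * (‖F‖ ^ p.toReal + 2) := by
            apply mul_le_mul_of_nonneg_left _ (by positivity)
            have h1 := Stmt8Aux.sum_rpow_norm_bidual_le p hpr1 F (Finset.range m)
            have h2 := sum_geometric_two_le m
            exact add_le_add h1 h2
    have e3 : ‖z m‖ ^ p.toReal ≤ B ^ p.toReal := by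
      rw [hBdef, ← Real.rpow_mul (by positivity), one_div, inv_mul_cancel₀ hpr.ne',
        Real.rpow_one]
      rw [e1]
      exact e2
    exact (Real.rpow_le_rpow_iff (norm_nonneg _) hB0 hpr).mp e3
  -- coordinate functionals of f
  set fk : ∀ k, StrongDual ℝ (X k) := fun k => f.comp (Stmt8Aux.sgl p hpr k) with hfkdef
  -- truncation identity
  have htrunc : ∀ K : ℕ, f.comp (Stmt8Aux.PN p hpr K) =
      ∑ k ∈ Finset.range K, Stmt8Aux.adjPrj p k (fk k) := by
    intro K
    apply ContinuousLinearMap.ext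
    intro x
    rw [ContinuousLinearMap.coe_comp', Function.comp_apply, Stmt8Aux.PN_eq_sum, map_sum,
      ContinuousLinearMap.sum_apply]
    rfl
  have hFtrunc : ∀ K : ℕ, F (f.comp (Stmt8Aux.PN p hpr K)) =
      ∑ k ∈ Finset.range K, Fk k (fk k) := by
    intro K
    rw [htrunc K, map_sum]
    rfl
  -- main limit
  rw [Metric.tendsto_atTop]
  intro ε hε
  set ε4 : ℝ := ε / (2*(B + ‖F‖ + 1)) with hε4def
  have hε4 : 0 < ε4 := by
    apply div_pos hε
    have := norm_nonneg F
    linarith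
  -- choose K
  have hAten := Stmt8Aux.trunc_tendsto p hpr1 f
  obtain ⟨K, hK⟩ := (Metric.tendsto_atTop.mp hAten) ε4 hε4
  have hgK : ‖f - f.comp (Stmt8Aux.PN p hpr K)‖ < ε4 := by
    have := hK K le_rfl
    rwa [Real.dist_eq, sub_zero, abs_of_nonneg (norm_nonneg _)] at this
  -- finite sum convergence
  have hfin : Tendsto (fun m => ∑ k ∈ Finset.range K, (fk k (y k m) - Fk k (fk k)))
      atTop (𝓝 0) := by
    have : (0:ℝ) = ∑ k ∈ Finset.range K, (0:ℝ) := by simp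
    rw [this]
    apply tendsto_finset_sum
    intro k _
    have h := (hy2 k (fk k)).sub_const (Fk k (fk k))
    simpa using h
  obtain ⟨m1, hm1⟩ := (Metric.tendsto_atTop.mp hfin) (ε/2) (by linarith)
  refine ⟨max K m1, fun m hm => ?_⟩
  have hmK : K ≤ m := le_trans (le_max_left _ _) hm
  have hmm1 : m1 ≤ m := le_trans (le_max_right _ _) hm
  -- decomposition
  have hzcoe : ∀ k, k < m → (z m : ∀ i, X i) k = y k m := by
    intro k hk
    rw [hzdef]
    rw [Stmt8Aux.sum_single_coe p (Finset.range m) (fun k => y k m) k]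
    rw [if_pos (Finset.mem_range.mpr hk)]
  have hfPN : f (Stmt8Aux.PN p hpr K (z m)) = ∑ k ∈ Finset.range K, fk k (y k m) := by
    rw [Stmt8Aux.PN_eq_sum, map_sum]
    apply Finset.sum_congr rfl
    intro k hk
    rw [hzcoe k (lt_of_lt_of_le (Finset.mem_range.mp hk) hmK)]
    rfl
  have hdecomp : f (z m) - F f =
      (∑ k ∈ Finset.range K, (fk k (y k m) - Fk k (fk k)))
      + (f - f.comp (Stmt8Aux.PN p hpr K)) (z m)
      - F (f - f.comp (Stmt8Aux.PN p hpr K)) := by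
    rw [Finset.sum_sub_distrib, map_sub, ← hfPN, ← hFtrunc K]
    simp only [ContinuousLinearMap.sub_apply, ContinuousLinearMap.coe_comp',
      Function.comp_apply]
    ring
  have hb1 : |(f - f.comp (Stmt8Aux.PN p hpr K)) (z m)| ≤ ε4 * B := by
    calc |(f - f.comp (Stmt8Aux.PN p hpr K)) (z m)|
        ≤ ‖f - f.comp (Stmt8Aux.PN p hpr K)‖ * ‖z m‖ :=
          (f - f.comp (Stmt8Aux.PN p hpr K)).le_opNorm _
      _ ≤ ε4 * B := mul_le_mul hgK.le (hzB m) (norm_nonneg _) hε4.le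
  have hb2 : |F (f - f.comp (Stmt8Aux.PN p hpr K))| ≤ ‖F‖ * ε4 := by
    calc |F (f - f.comp (Stmt8Aux.PN p hpr K))|
        ≤ ‖F‖ * ‖f - f.comp (Stmt8Aux.PN p hpr K)‖ := F.le_opNorm _
      _ ≤ ‖F‖ * ε4 := mul_le_mul_of_nonneg_left hgK.le (norm_nonneg F)
  have hb3 : |∑ k ∈ Finset.range K, (fk k (y k m) - Fk k (fk k))| < ε/2 := by
    have := hm1 m hmm1
    rwa [Real.dist_eq, sub_zero] at this
  rw [Real.dist_eq]
  rw [hdecomp]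
  have habs : |(∑ k ∈ Finset.range K, (fk k (y k m) - Fk k (fk k)))
      + (f - f.comp (Stmt8Aux.PN p hpr K)) (z m)
      - F (f - f.comp (Stmt8Aux.PN p hpr K))| ≤
      |∑ k ∈ Finset.range K, (fk k (y k m) - Fk k (fk k))|
      + |(f - f.comp (Stmt8Aux.PN p hpr K)) (z m)|
      + |F (f - f.comp (Stmt8Aux.PN p hpr K))| := by
    calc |_ + _ - _| ≤ |_ + _| + |F (f - f.comp (Stmt8Aux.PN p hpr K))| := abs_sub _ _
      _ ≤ _ := by
          apply add_le_add_left
          exact abs_add_le _ _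
  have hfinal : ε4 * B + ‖F‖ * ε4 ≤ ε/2 := by
    have hexp : ε4 * (B + ‖F‖ + 1) = ε/2 := by
      rw [hε4def]
      field_simp
    nlinarith [hε4, hB0, norm_nonneg F]
  linarith [habs, hb1, hb2, hb3]


theorem stmt8 (X : ℕ → Type*) [∀ k, NormedAddCommGroup (X k)] [∀ k, NormedSpace ℝ (X k)]
    [∀ k, CompleteSpace (X k)] (p : ℝ≥0∞) [Fact (1 ≤ p)] (hp1 : 1 < p) (hp2 : p ≠ ⊤)
    (hX : ∀ k, WStarSeqDense (X k)) :
    WStarSeqDense (lp X p) := by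
  exact stmt8' X p hp1 hp2 (fun k => hX k)
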